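/- Let A ≠ 0 on U and define φ₁ = −3·(B·P + A_{1.0})/(5·A) + (3/5)·Q and φ₂ = 3·B·(B·P + A_{1.0})/(5·A²) − 3·(B_{1.0} + A_{0.1} + 3·B·Q)/(5·A) + (6/5)·R (formulas (4.14)). Then the pseudoscalar field Ω = (5/3)·(∂φ₁/∂y − ∂φ₂/∂x) is given by the mirror-symmetric effective formula (4.21): Ω = 2·B·A_{1.0}·(B·P + A_{1.0})/A³ − (2·B_{1.0} + 3·B·Q)·A_{1.0}/A² + (A_{0.1} − 2·B_{1.0})·B·P/A² − (B·A_{2.0} + B²·P_{1.0})/A² + B_{2.0}/A + (3·B_{1.0}·Q + 3·B·Q_{1.0} − B_{0.1}·P − B·P_{0.1})/A + Q_{0.1} − 2·R_{1.0}. -/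

import Mathlib

noncomputable section

open Real

/-- Partial derivative in the first argument (`f_{1.0}`). -/
def pdx (f : ℝ → ℝ → ℝ) : ℝ → ℝ → ℝ := fun x y => deriv (fun t => f t y) x

/-- Partial derivative in the second argument (`f_{0.1}`). -/
def pdy (f : ℝ → ℝ → ℝ) : ℝ → ℝ → ℝ := fun x y => deriv (fun t => f x t) y

/-- Indexed partial derivative: `0 ↦ ∂/∂x`, `1 ↦ ∂/∂y`. -/
def pd (i : Fin 2) (f : ℝ → ℝ → ℝ) : ℝ → ℝ → ℝ := if i = 0 then pdx f else pdy f

/-- Smoothness of a two-variable real function on a set `U ⊆ ℝ²`. -/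
def Smooth2 (U : Set (ℝ × ℝ)) (f : ℝ → ℝ → ℝ) : Prop :=
  ContDiffOn ℝ (⊤ : ℕ∞) (Function.uncurry f) U

/-- The quantity `A` of formula (1.6). -/
def coefA (P Q R S : ℝ → ℝ → ℝ) : ℝ → ℝ → ℝ := fun x y =>
  pdy (pdy P) x y - 2 * pdx (pdy Q) x y + pdx (pdx R) x y
    + 2 * P x y * pdx S x y + S x y * pdx P x y
    - 3 * P x y * pdy R x y - 3 * R x y * pdy P x y
    - 3 * Q x y * pdx R x y + 6 * Q x y * pdy Q x y

/-- The quantity `B` of formula (1.6). -/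
def coefB (P Q R S : ℝ → ℝ → ℝ) : ℝ → ℝ → ℝ := fun x y =>
  pdx (pdx S) x y - 2 * pdx (pdy R) x y + pdy (pdy Q) x y
    - 2 * S x y * pdy P x y - P x y * pdy S x y
    + 3 * S x y * pdx Q x y + 3 * Q x y * pdx S x y
    + 3 * R x y * pdy Q x y - 6 * R x y * pdx R x y

/-- `φ₁` given by formula (4.14). -/
def phiA1 (P Q R S : ℝ → ℝ → ℝ) : ℝ → ℝ → ℝ := fun x y =>
  -3 * (coefB P Q R S x y * P x y + pdx (coefA P Q R S) x y) / (5 * coefA P Q R S x y)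
    + (3/5) * Q x y

/-- `φ₂` given by formula (4.14). -/
def phiA2 (P Q R S : ℝ → ℝ → ℝ) : ℝ → ℝ → ℝ := fun x y =>
  3 * coefB P Q R S x y * (coefB P Q R S x y * P x y + pdx (coefA P Q R S) x y)
      / (5 * (coefA P Q R S x y)^2)
    - 3 * (pdx (coefB P Q R S) x y + pdy (coefA P Q R S) x y
        + 3 * coefB P Q R S x y * Q x y) / (5 * coefA P Q R S x y)
    + (6/5) * R x y


section Helpers

variable {U : Set (ℝ × ℝ)} {f : ℝ → ℝ → ℝ} {x y : ℝ}

theorem Smooth2.diffAt (hf : Smooth2 U f) (hU : IsOpen U) (h : (x, y) ∈ U) :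
    DifferentiableAt ℝ (Function.uncurry f) (x, y) :=
  ((hf.contDiffAt (hU.mem_nhds h)).differentiableAt (by simp))

theorem hasDerivAt_pdx' (hf : Smooth2 U f) (hU : IsOpen U) (h : (x, y) ∈ U) :
    HasDerivAt (fun t => f t y) (fderiv ℝ (Function.uncurry f) (x, y) (1, 0)) x := by
  have hd := (hf.diffAt hU h).hasFDerivAt
  have hline : HasDerivAt (fun t : ℝ => (t, y)) ((1 : ℝ), (0 : ℝ)) x :=
    (hasDerivAt_id x).prodMk (hasDerivAt_const x y)
  exact hd.comp_hasDerivAt x hline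

theorem hasDerivAt_pdy' (hf : Smooth2 U f) (hU : IsOpen U) (h : (x, y) ∈ U) :
    HasDerivAt (fun t => f x t) (fderiv ℝ (Function.uncurry f) (x, y) (0, 1)) y := by
  have hd := (hf.diffAt hU h).hasFDerivAt
  have hline : HasDerivAt (fun t : ℝ => (x, t)) ((0 : ℝ), (1 : ℝ)) y :=
    (hasDerivAt_const y x).prodMk (hasDerivAt_id y)
  exact hd.comp_hasDerivAt y hline

theorem pdx_eq_fderiv (hf : Smooth2 U f) (hU : IsOpen U) (h : (x, y) ∈ U) :
    pdx f x y = fderiv ℝ (Function.uncurry f) (x, y) (1, 0) :=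
  (hasDerivAt_pdx' hf hU h).deriv

theorem pdy_eq_fderiv (hf : Smooth2 U f) (hU : IsOpen U) (h : (x, y) ∈ U) :
    pdy f x y = fderiv ℝ (Function.uncurry f) (x, y) (0, 1) :=
  (hasDerivAt_pdy' hf hU h).deriv

theorem hasDerivAt_pdx (hf : Smooth2 U f) (hU : IsOpen U) (h : (x, y) ∈ U) :
    HasDerivAt (fun t => f t y) (pdx f x y) x :=
  (pdx_eq_fderiv hf hU h) ▸ hasDerivAt_pdx' hf hU h

theorem hasDerivAt_pdy (hf : Smooth2 U f) (hU : IsOpen U) (h : (x, y) ∈ U) :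
    HasDerivAt (fun t => f x t) (pdy f x y) y :=
  (pdy_eq_fderiv hf hU h) ▸ hasDerivAt_pdy' hf hU h

theorem Smooth2.pdx (hf : Smooth2 U f) (hU : IsOpen U) : Smooth2 U (pdx f) := by
  have hfd : ContDiffOn ℝ (⊤ : ℕ∞) (fun p => fderiv ℝ (Function.uncurry f) p) U :=
    hf.fderiv_of_isOpen hU (by exact_mod_cast le_top)
  have h2 : ContDiffOn ℝ (⊤ : ℕ∞) (fun p => fderiv ℝ (Function.uncurry f) p ((1 : ℝ), (0 : ℝ))) U :=
    hfd.clm_apply contDiffOn_const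
  exact h2.congr fun p hp => pdx_eq_fderiv hf hU (by simpa using hp)

theorem Smooth2.pdy (hf : Smooth2 U f) (hU : IsOpen U) : Smooth2 U (pdy f) := by
  have hfd : ContDiffOn ℝ (⊤ : ℕ∞) (fun p => fderiv ℝ (Function.uncurry f) p) U :=
    hf.fderiv_of_isOpen hU (by exact_mod_cast le_top)
  have h2 : ContDiffOn ℝ (⊤ : ℕ∞) (fun p => fderiv ℝ (Function.uncurry f) p ((0 : ℝ), (1 : ℝ))) U :=
    hfd.clm_apply contDiffOn_const
  exact h2.congr fun p hp => pdy_eq_fderiv hf hU (by simpa using hp)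

theorem pd_comm (hf : Smooth2 U f) (hU : IsOpen U) (h : (x, y) ∈ U) :
    pdx (pdy f) x y = pdy (pdx f) x y := by
  have hc : ContDiffAt ℝ (⊤ : ℕ∞) (Function.uncurry f) (x, y) := hf.contDiffAt (hU.mem_nhds h)
  have hc2 : ContDiffAt ℝ 2 (Function.uncurry f) (x, y) := hc.of_le (by decide)
  have hsymm := hc2.isSymmSndFDerivAt (by simp)
  have hd1 : DifferentiableAt ℝ (fderiv ℝ (Function.uncurry f)) (x, y) :=
    (hc2.fderiv_right (m := 1) (le_refl _)).differentiableAt (by simp)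
  have key : ∀ v : ℝ × ℝ, HasFDerivAt (fun p => fderiv ℝ (Function.uncurry f) p v)
      ((ContinuousLinearMap.apply ℝ ℝ v).comp
        (fderiv ℝ (fderiv ℝ (Function.uncurry f)) (x, y))) (x, y) := fun v =>
    ((ContinuousLinearMap.apply ℝ ℝ v).hasFDerivAt).comp (x, y) hd1.hasFDerivAt
  have e1 : Function.uncurry (pdy f) =ᶠ[nhds (x, y)]
      (fun p => fderiv ℝ (Function.uncurry f) p ((0 : ℝ), (1 : ℝ))) := by
    filter_upwards [hU.mem_nhds h] with p hp
    simpa [Function.uncurry] using pdy_eq_fderiv hf hU (x := p.1) (y := p.2) (by simpa using hp)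
  have e2 : Function.uncurry (pdx f) =ᶠ[nhds (x, y)]
      (fun p => fderiv ℝ (Function.uncurry f) p ((1 : ℝ), (0 : ℝ))) := by
    filter_upwards [hU.mem_nhds h] with p hp
    simpa [Function.uncurry] using pdx_eq_fderiv hf hU (x := p.1) (y := p.2) (by simpa using hp)
  have l1 : pdx (pdy f) x y
      = fderiv ℝ (fderiv ℝ (Function.uncurry f)) (x, y) ((1 : ℝ), (0 : ℝ)) ((0 : ℝ), (1 : ℝ)) := by
    rw [pdx_eq_fderiv ((hf.pdy hU)) hU h, e1.fderiv_eq, (key _).fderiv]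
    rfl
  have l2 : pdy (pdx f) x y
      = fderiv ℝ (fderiv ℝ (Function.uncurry f)) (x, y) ((0 : ℝ), (1 : ℝ)) ((1 : ℝ), (0 : ℝ)) := by
    rw [pdy_eq_fderiv ((hf.pdx hU)) hU h, e2.fderiv_eq, (key _).fderiv]
    rfl
  rw [l1, l2, hsymm.eq]

variable {P Q R S : ℝ → ℝ → ℝ}

theorem smooth_coefA (hU : IsOpen U) (hP : Smooth2 U P) (hQ : Smooth2 U Q)
    (hR : Smooth2 U R) (hS : Smooth2 U S) : Smooth2 U (coefA P Q R S) := by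
  have h1 := (hP.pdy hU).pdy hU
  have h2 := (hQ.pdy hU).pdx hU
  have h3 := (hR.pdx hU).pdx hU
  have h4 := hS.pdx hU
  have h5 := hP.pdx hU
  have h6 := hR.pdy hU
  have h7 := hP.pdy hU
  have h8 := hR.pdx hU
  have h9 := hQ.pdy hU
  unfold Smooth2 Function.uncurry at *
  unfold coefA
  fun_prop

theorem smooth_coefB (hU : IsOpen U) (hP : Smooth2 U P) (hQ : Smooth2 U Q)
    (hR : Smooth2 U R) (hS : Smooth2 U S) : Smooth2 U (coefB P Q R S) := by
  have h1 := (hS.pdx hU).pdx hU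
  have h2 := (hR.pdy hU).pdx hU
  have h3 := (hQ.pdy hU).pdy hU
  have h4 := hP.pdy hU
  have h5 := hS.pdy hU
  have h6 := hQ.pdx hU
  have h7 := hS.pdx hU
  have h8 := hQ.pdy hU
  have h9 := hR.pdx hU
  unfold Smooth2 Function.uncurry at *
  unfold coefB
  fun_prop

end Helpers

/-- Effective formula (4.21) for `Ω = (5/3)·(∂φ₁/∂y − ∂φ₂/∂x)` when `A ≠ 0`. -/
theorem Omega_effective_formula_A_ne_zero
    (U : Set (ℝ × ℝ)) (hU : IsOpen U) (hUconn : IsConnected U)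
    (P Q R S : ℝ → ℝ → ℝ)
    (hP : Smooth2 U P) (hQ : Smooth2 U Q) (hR : Smooth2 U R) (hS : Smooth2 U S)
    (hA : ∀ x y : ℝ, (x, y) ∈ U → coefA P Q R S x y ≠ 0) :
    ∀ x y : ℝ, (x, y) ∈ U →
      (5/3) * (pdy (phiA1 P Q R S) x y - pdx (phiA2 P Q R S) x y) =
        2 * coefB P Q R S x y * pdx (coefA P Q R S) x y *
            (coefB P Q R S x y * P x y + pdx (coefA P Q R S) x y)
            / (coefA P Q R S x y)^3
        - (2 * pdx (coefB P Q R S) x y + 3 * coefB P Q R S x y * Q x y) *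
            pdx (coefA P Q R S) x y / (coefA P Q R S x y)^2
        + (pdy (coefA P Q R S) x y - 2 * pdx (coefB P Q R S) x y) *
            coefB P Q R S x y * P x y / (coefA P Q R S x y)^2
        - (coefB P Q R S x y * pdx (pdx (coefA P Q R S)) x y
            + (coefB P Q R S x y)^2 * pdx P x y) / (coefA P Q R S x y)^2
        + pdx (pdx (coefB P Q R S)) x y / coefA P Q R S x y
        + (3 * pdx (coefB P Q R S) x y * Q x y
            + 3 * coefB P Q R S x y * pdx Q x y
            - pdy (coefB P Q R S) x y * P x y
            - coefB P Q R S x y * pdy P x y) / coefA P Q R S x y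
        + pdy Q x y - 2 * pdx R x y := by
  intro x y hxy
  have hA2 : Smooth2 U (coefA P Q R S) := smooth_coefA hU hP hQ hR hS
  have hB2 : Smooth2 U (coefB P Q R S) := smooth_coefB hU hP hQ hR hS
  have ha := hA x y hxy
  have h5a : (5 : ℝ) * coefA P Q R S x y ≠ 0 := mul_ne_zero (by norm_num) ha
  have h5a2 : (5 : ℝ) * (coefA P Q R S x y) ^ 2 ≠ 0 :=
    mul_ne_zero (by norm_num) (pow_ne_zero 2 ha)
  have hBy := hasDerivAt_pdy hB2 hU hxy
  have hPy := hasDerivAt_pdy hP hU hxy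
  have hQy := hasDerivAt_pdy hQ hU hxy
  have hAy := hasDerivAt_pdy hA2 hU hxy
  have hAxy := hasDerivAt_pdy (hA2.pdx hU) hU hxy
  have hBx := hasDerivAt_pdx hB2 hU hxy
  have hPx := hasDerivAt_pdx hP hU hxy
  have hQx := hasDerivAt_pdx hQ hU hxy
  have hRx := hasDerivAt_pdx hR hU hxy
  have hAx := hasDerivAt_pdx hA2 hU hxy
  have hAxx := hasDerivAt_pdx (hA2.pdx hU) hU hxy
  have hAyx := hasDerivAt_pdx (hA2.pdy hU) hU hxy
  have hBxx := hasDerivAt_pdx (hB2.pdx hU) hU hxy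
  have h1 := ((((hBy.mul hPy).add hAxy).const_mul (-3)).div (hAy.const_mul 5) h5a).add
    (hQy.const_mul (3/5))
  have h2 := ((((hBx.const_mul 3).mul ((hBx.mul hPx).add hAxx)).div
        ((hAx.pow 2).const_mul 5) h5a2).sub
      ((((hBxx.add hAyx).add ((hBx.const_mul 3).mul hQx)).const_mul 3).div
        (hAx.const_mul 5) h5a)).add (hRx.const_mul (6/5))
  have e1 : pdy (phiA1 P Q R S) x y = _ := h1.deriv
  have e2 : pdx (phiA2 P Q R S) x y = _ := h2.deriv
  rw [e1, e2, pd_comm hA2 hU hxy]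
  simp only [Pi.mul_apply, Pi.add_apply, Pi.pow_apply]
  field_simp
  ring
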